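/- Let p ≥ 2, q ≥ 1, and a, b, c, d ∈ ℝ with a - b = c - d. Then, with signed powers a^r := |a|^{r-1}a, one has |a^{(p+q-1)/p} - b^{(p+q-1)/p}|^p ≤ (2^{p-2}(p+q-1)^p / (p^p q)) · (c^{p-1} - d^{p-1}) · (a^q - b^q). In particular there is C = C(p) > 0, independent of q, so the right-hand side is at most C q^{p-1} (c^{p-1}-d^{p-1})(a^q-b^q). -/

import Mathlib

open Real

/-- Signed power: `a^r := |a|^(r-1) * a`. -/
noncomputable def spow (a r : ℝ) : ℝ := |a| ^ (r - 1) * a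

open MeasureTheory


lemma spow_of_nonneg {x r : ℝ} (hx : 0 ≤ x) (hr : 0 < r) : spow x r = x ^ r := by
  rcases eq_or_lt_of_le hx with h | h
  · simp [spow, ← h, Real.zero_rpow hr.ne']
  · rw [spow, abs_of_pos h]
    nth_rewrite 2 [← Real.rpow_one x]
    rw [← Real.rpow_add h]; ring_nf

lemma spow_neg_arg (x r : ℝ) : spow (-x) r = - spow x r := by
  simp [spow, abs_neg, mul_neg]

lemma spow_mono {r : ℝ} (hr : 1 ≤ r) {x y : ℝ} (hxy : x ≤ y) : spow x r ≤ spow y r := by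
  have hr0 : 0 < r := by linarith
  rcases le_or_gt 0 x with hx | hx
  · rw [spow_of_nonneg hx hr0, spow_of_nonneg (hx.trans hxy) hr0]
    exact Real.rpow_le_rpow hx hxy hr0.le
  · rcases le_or_gt y 0 with hy | hy
    · have e1 : spow x r = -((-x) ^ r) := by
        rw [← spow_of_nonneg (by linarith : (0:ℝ) ≤ -x) hr0, spow_neg_arg, neg_neg]
      have e2 : spow y r = -((-y) ^ r) := by
        rw [← spow_of_nonneg (by linarith : (0:ℝ) ≤ -y) hr0, spow_neg_arg, neg_neg]
      have h := Real.rpow_le_rpow (by linarith : (0:ℝ) ≤ -y) (by linarith : -y ≤ -x) hr0.le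
      linarith
    · have h1 : spow x r ≤ 0 := mul_nonpos_of_nonneg_of_nonpos (Real.rpow_nonneg (abs_nonneg x) _) hx.le
      have h2 : 0 ≤ spow y r := mul_nonneg (Real.rpow_nonneg (abs_nonneg y) _) hy.le
      linarith

lemma continuous_abs_rpow {c : ℝ} (hc : 0 ≤ c) : Continuous fun x : ℝ => |x| ^ c :=
  (Real.continuous_rpow_const hc).comp continuous_abs

lemma hasDerivAt_spow {t : ℝ} (ht : 1 ≤ t) (x : ℝ) :
    HasDerivAt (fun y => spow y t) (t * |x| ^ (t - 1)) x := by
  have ht0 : 0 < t := by linarith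
  rcases lt_trichotomy x 0 with hx | hx | hx
  · have h1 : HasDerivAt (fun y : ℝ => (-y) ^ t) (t * (-x) ^ (t - 1) * (-1)) x :=
      (Real.hasDerivAt_rpow_const (Or.inl (by linarith : -x ≠ 0))).comp x (hasDerivAt_neg x)
    have h2 := h1.neg
    have h3 : HasDerivAt (fun y => spow y t) (-(t * (-x) ^ (t - 1) * (-1))) x := by
      apply h2.congr_of_eventuallyEq
      filter_upwards [Iio_mem_nhds hx] with y hy
      show spow y t = -((-y) ^ t)
      rw [← spow_of_nonneg (by simp at hy; linarith : (0:ℝ) ≤ -y) ht0, spow_neg_arg, neg_neg]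
    convert h3 using 1
    rw [abs_of_neg hx]; ring
  · subst hx
    rcases eq_or_lt_of_le ht with h1 | h1
    · have : (fun y : ℝ => spow y t) = fun y => y := by
        funext y; rw [spow, ← h1]; norm_num
      rw [this]
      rw [show t * |(0:ℝ)| ^ (t - 1) = 1 by rw [← h1]; norm_num]
      exact hasDerivAt_id' 0
    · have hval : t * |(0:ℝ)| ^ (t - 1) = 0 := by
        rw [abs_zero, Real.zero_rpow (by linarith : t - 1 ≠ 0), mul_zero]
      rw [hval, hasDerivAt_iff_tendsto_slope]
      have hcont : Filter.Tendsto (fun y : ℝ => |y| ^ (t - 1)) (nhdsWithin 0 {(0:ℝ)}ᶜ) (nhds 0) := by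
        have := (continuous_abs_rpow (by linarith : (0:ℝ) ≤ t - 1)).tendsto 0
        rw [abs_zero, Real.zero_rpow (by linarith : t - 1 ≠ 0)] at this
        exact this.mono_left nhdsWithin_le_nhds
      apply hcont.congr'
      filter_upwards [self_mem_nhdsWithin] with y hy
      have hy0 : y ≠ 0 := hy
      rw [slope_def_field, spow, spow, abs_zero, Real.zero_rpow (by linarith : t - 1 ≠ 0)]
      field_simp
      ring
  · have h1 : HasDerivAt (fun y : ℝ => y ^ t) (t * x ^ (t - 1)) x :=
      Real.hasDerivAt_rpow_const (Or.inl hx.ne')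
    have h3 : HasDerivAt (fun y => spow y t) (t * x ^ (t - 1)) x := by
      apply h1.congr_of_eventuallyEq
      filter_upwards [Ioi_mem_nhds hx] with y hy
      rw [spow_of_nonneg (le_of_lt hy) ht0]
    rwa [abs_of_pos hx]

lemma integral_spow {t : ℝ} (ht : 1 ≤ t) (b a : ℝ) :
    ∫ x in b..a, t * |x| ^ (t - 1) = spow a t - spow b t :=
  intervalIntegral.integral_eq_sub_of_hasDerivAt (fun x _ => hasDerivAt_spow ht x)
    ((continuous_const.mul (continuous_abs_rpow (by linarith))).intervalIntegrable _ _)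

lemma real_add_rpow_le {x y r : ℝ} (hx : 0 ≤ x) (hy : 0 ≤ y) (hr : 1 ≤ r) :
    x ^ r + y ^ r ≤ (x + y) ^ r := by
  lift x to NNReal using hx
  lift y to NNReal using hy
  have := NNReal.add_rpow_le_rpow_add x y hr
  exact_mod_cast this

lemma real_rpow_add_le {x y r : ℝ} (hx : 0 ≤ x) (hy : 0 ≤ y) (hr : 1 ≤ r) :
    (x + y) ^ r ≤ 2 ^ (r - 1) * (x ^ r + y ^ r) := by
  lift x to NNReal using hx
  lift y to NNReal using hy
  have := NNReal.rpow_add_le_mul_rpow_add_rpow x y hr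
  exact_mod_cast this

lemma key_nonneg {x y r : ℝ} (hy : 0 ≤ y) (hxy : y ≤ x) (hr : 1 ≤ r) :
    (x - y) ^ r ≤ 2 ^ (r - 1) * (x ^ r - y ^ r) := by
  have h1 : (x - y) ^ r + y ^ r ≤ x ^ r := by
    have := real_add_rpow_le (by linarith : (0:ℝ) ≤ x - y) hy hr
    rwa [sub_add_cancel] at this
  have h2 : (1:ℝ) ≤ 2 ^ (r - 1) := by
    rw [show (1:ℝ) = 2 ^ (0:ℝ) by simp]
    exact Real.rpow_le_rpow_left_iff (by norm_num) |>.mpr (by linarith)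
  have h3 : 0 ≤ (x - y) ^ r := Real.rpow_nonneg (by linarith) _
  nlinarith [Real.rpow_nonneg hy r]

lemma key_two_pow {r : ℝ} (hr : 1 ≤ r) {c d : ℝ} (hdc : d ≤ c) :
    (c - d) ^ r ≤ 2 ^ (r - 1) * (spow c r - spow d r) := by
  have hr0 : 0 < r := by linarith
  rcases le_or_gt 0 d with hd | hd
  · rw [spow_of_nonneg (hd.trans hdc) hr0, spow_of_nonneg hd hr0]
    exact key_nonneg hd hdc hr
  · rcases le_or_gt c 0 with hc | hc
    · have e1 : spow c r = -((-c) ^ r) := by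
        rw [← spow_of_nonneg (by linarith : (0:ℝ) ≤ -c) hr0, spow_neg_arg, neg_neg]
      have e2 : spow d r = -((-d) ^ r) := by
        rw [← spow_of_nonneg (by linarith : (0:ℝ) ≤ -d) hr0, spow_neg_arg, neg_neg]
      have := key_nonneg (by linarith : (0:ℝ) ≤ -c) (by linarith : -c ≤ -d) hr
      rw [show -d - -c = c - d by ring] at this
      rw [e1, e2]
      calc (c - d) ^ r ≤ 2 ^ (r - 1) * ((-d) ^ r - (-c) ^ r) := this
        _ = 2 ^ (r - 1) * (-(-c) ^ r - -(-d) ^ r) := by ring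
    · have e1 : spow c r = c ^ r := spow_of_nonneg hc.le hr0
      have e2 : spow d r = -((-d) ^ r) := by
        rw [← spow_of_nonneg (by linarith : (0:ℝ) ≤ -d) hr0, spow_neg_arg, neg_neg]
      have := real_rpow_add_le hc.le (by linarith : (0:ℝ) ≤ -d) hr
      rw [show c + -d = c - d by ring] at this
      rw [e1, e2]
      calc (c - d) ^ r ≤ 2 ^ (r - 1) * (c ^ r + (-d) ^ r) := this
        _ = 2 ^ (r - 1) * (c ^ r - -(-d) ^ r) := by ring

lemma holder_core {p u b a : ℝ} (hp : 1 ≤ p) (hu : 0 ≤ u) (hba : b < a) :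
    (∫ x in b..a, |x| ^ u) ^ p ≤ (a - b) ^ (p - 1) * ∫ x in b..a, |x| ^ (u * p) := by
  set μ : Measure ℝ := volume.restrict (Set.Ioc b a) with hμ
  have hμuniv : μ Set.univ = ENNReal.ofReal (a - b) := by
    rw [hμ, Measure.restrict_apply_univ, Real.volume_Ioc]
  haveI : IsFiniteMeasure μ := ⟨by rw [hμuniv]; exact ENNReal.ofReal_lt_top⟩
  haveI : NeZero μ := by
    constructor
    intro h
    have h2 : ENNReal.ofReal (a - b) = 0 := by rw [← hμuniv, h]; simp
    rw [ENNReal.ofReal_eq_zero] at h2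
    linarith
  have hp0 : (0:ℝ) ≤ p := by linarith
  have jensen := (convexOn_rpow hp).map_average_le
    (f := fun x : ℝ => |x| ^ u) (μ := μ)
    ((Real.continuous_rpow_const hp0).continuousOn) isClosed_Ici
    (Filter.Eventually.of_forall fun x => Real.rpow_nonneg (abs_nonneg x) u)
    ((continuous_abs_rpow hu).integrableOn_Ioc)
    (((Real.continuous_rpow_const hp0).comp (continuous_abs_rpow hu)).integrableOn_Ioc)
  rw [average_eq, average_eq, measureReal_def, hμuniv, ENNReal.toReal_ofReal (by linarith)] at jensen
  have hI : ∫ x, |x| ^ u ∂μ = ∫ x in b..a, |x| ^ u := (intervalIntegral.integral_of_le hba.le).symm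
  have hJ : ∫ x, (fun z : ℝ => z ^ p) (|x| ^ u) ∂μ = ∫ x in b..a, |x| ^ (u * p) := by
    rw [intervalIntegral.integral_of_le hba.le]
    congr 1; funext x
    show (|x| ^ u) ^ p = |x| ^ (u * p)
    rw [← Real.rpow_mul (abs_nonneg x)]
  rw [hI, hJ] at jensen
  set I := ∫ x in b..a, |x| ^ u
  set J := ∫ x in b..a, |x| ^ (u * p)
  have hab : (0:ℝ) < a - b := by linarith
  have hI0 : 0 ≤ I := intervalIntegral.integral_nonneg hba.le
    (fun x _ => Real.rpow_nonneg (abs_nonneg x) u)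
  have expand : ((a - b)⁻¹ • I) ^ p = ((a - b) ^ p)⁻¹ * I ^ p := by
    rw [smul_eq_mul, Real.mul_rpow (by positivity) hI0, Real.inv_rpow hab.le]
  rw [expand, smul_eq_mul] at jensen
  have hpow : (0:ℝ) < (a - b) ^ p := Real.rpow_pos_of_pos hab p
  have hsub : (a - b) ^ p * (a - b)⁻¹ = (a - b) ^ (p - 1) := by
    rw [Real.rpow_sub hab, Real.rpow_one, div_eq_mul_inv]
  calc I ^ p = (a - b) ^ p * (((a - b) ^ p)⁻¹ * I ^ p) := by field_simp
    _ ≤ (a - b) ^ p * ((a - b)⁻¹ * J) := mul_le_mul_of_nonneg_left jensen hpow.le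
    _ = (a - b) ^ (p - 1) * J := by rw [← mul_assoc, hsub]

lemma main_ineq {p : ℝ} (hp : 2 ≤ p) {q a b c d : ℝ} (hq : 1 ≤ q) (h : a - b = c - d)
    (hba : b ≤ a) :
    |spow a ((p + q - 1) / p) - spow b ((p + q - 1) / p)| ^ p ≤
      (2 ^ (p - 2) * (p + q - 1) ^ p / (p ^ p * q)) *
        (spow c (p - 1) - spow d (p - 1)) * (spow a q - spow b q) := by
  have hp0 : (0:ℝ) < p := by linarith
  have hq0 : (0:ℝ) < q := by linarith
  set t := (p + q - 1) / p with htdef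
  have ht : 1 ≤ t := by rw [htdef, le_div_iff₀ hp0]; linarith
  rcases eq_or_lt_of_le hba with rfl | hba'
  · simp [sub_self, Real.zero_rpow hp0.ne']
  have hdc : d ≤ c := by linarith
  have hu : t - 1 = (q - 1) / p := by rw [htdef]; field_simp; ring
  have hu0 : (0:ℝ) ≤ (q - 1) / p := div_nonneg (by linarith) hp0.le
  set I := ∫ x in b..a, |x| ^ ((q - 1) / p) with hIdef
  set K := ∫ x in b..a, |x| ^ (q - 1) with hKdef
  have hIval : spow a t - spow b t = t * I := by
    have h1 := integral_spow ht b a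
    rw [hu] at h1
    rw [← h1, hIdef, intervalIntegral.integral_const_mul]
  have hKval : spow a q - spow b q = q * K := by
    have h1 := integral_spow hq b a
    rw [← h1, hKdef, intervalIntegral.integral_const_mul]
  have hcore := holder_core (by linarith : 1 ≤ p) hu0 hba'
  have hup : (q - 1) / p * p = q - 1 := by field_simp
  rw [hup] at hcore
  have hI0 : 0 ≤ I := intervalIntegral.integral_nonneg hba
    (fun x _ => Real.rpow_nonneg (abs_nonneg x) _)
  have hK0 : 0 ≤ K := intervalIntegral.integral_nonneg hba
    (fun x _ => Real.rpow_nonneg (abs_nonneg x) _)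
  have ht0 : (0:ℝ) ≤ t := by linarith
  have habs : |spow a t - spow b t| = spow a t - spow b t :=
    abs_of_nonneg (by linarith [spow_mono ht hba])
  have hX := key_two_pow (by linarith : (1:ℝ) ≤ p - 1) hdc
  rw [show p - 1 - 1 = p - 2 by ring] at hX
  rw [← h] at hX
  set X := spow c (p - 1) - spow d (p - 1)
  have htp : t ^ p = (p + q - 1) ^ p / p ^ p := Real.div_rpow (by linarith : (0:ℝ) ≤ p + q - 1) hp0.le p
  have htp0 : (0:ℝ) ≤ t ^ p := Real.rpow_nonneg ht0 p
  rw [habs, hIval, Real.mul_rpow ht0 hI0]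
  calc t ^ p * I ^ p ≤ t ^ p * ((a - b) ^ (p - 1) * K) :=
        mul_le_mul_of_nonneg_left hcore htp0
    _ ≤ t ^ p * (2 ^ (p - 2) * X * K) :=
        mul_le_mul_of_nonneg_left (mul_le_mul_of_nonneg_right hX hK0) htp0
    _ = (2 ^ (p - 2) * (p + q - 1) ^ p / (p ^ p * q)) * X * (q * K) := by
        rw [htp]; field_simp
    _ = (2 ^ (p - 2) * (p + q - 1) ^ p / (p ^ p * q)) * X * (spow a q - spow b q) := by
        rw [hKval]

theorem stmt4 (p : ℝ) (hp : 2 ≤ p) :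
    (∀ q a b c d : ℝ, 1 ≤ q → a - b = c - d →
      |spow a ((p + q - 1) / p) - spow b ((p + q - 1) / p)| ^ p ≤
        (2 ^ (p - 2) * (p + q - 1) ^ p / (p ^ p * q)) *
          (spow c (p - 1) - spow d (p - 1)) * (spow a q - spow b q)) ∧
    ∃ C > (0 : ℝ), ∀ q a b c d : ℝ, 1 ≤ q → a - b = c - d →
      |spow a ((p + q - 1) / p) - spow b ((p + q - 1) / p)| ^ p ≤
        C * q ^ (p - 1) * (spow c (p - 1) - spow d (p - 1)) * (spow a q - spow b q) := by
  have hp0 : (0:ℝ) < p := by linarith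
  have part1 : ∀ q a b c d : ℝ, 1 ≤ q → a - b = c - d →
      |spow a ((p + q - 1) / p) - spow b ((p + q - 1) / p)| ^ p ≤
        (2 ^ (p - 2) * (p + q - 1) ^ p / (p ^ p * q)) *
          (spow c (p - 1) - spow d (p - 1)) * (spow a q - spow b q) := by
    intro q a b c d hq h
    rcases le_total b a with hba | hab
    · exact main_ineq hp hq h hba
    · have h' : b - a = d - c := by linarith
      have h2 := main_ineq hp hq h' hab
      rw [abs_sub_comm] at h2
      have e : (2 ^ (p - 2) * (p + q - 1) ^ p / (p ^ p * q)) *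
            (spow d (p - 1) - spow c (p - 1)) * (spow b q - spow a q) =
          (2 ^ (p - 2) * (p + q - 1) ^ p / (p ^ p * q)) *
            (spow c (p - 1) - spow d (p - 1)) * (spow a q - spow b q) := by ring
      rw [e] at h2
      exact h2
  refine ⟨part1, 2 ^ (p - 2), Real.rpow_pos_of_pos two_pos _, ?_⟩
  intro q a b c d hq h
  have hq0 : (0:ℝ) < q := by linarith
  refine (part1 q a b c d hq h).trans ?_
  have hXY : 0 ≤ (spow c (p - 1) - spow d (p - 1)) * (spow a q - spow b q) := by
    rcases le_total b a with hba | hab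
    · have hdc : d ≤ c := by linarith
      exact mul_nonneg (sub_nonneg.mpr (spow_mono (by linarith) hdc))
        (sub_nonneg.mpr (spow_mono hq hba))
    · have hcd : c ≤ d := by linarith
      have h1 : spow c (p - 1) - spow d (p - 1) ≤ 0 :=
        sub_nonpos.mpr (spow_mono (by linarith) hcd)
      have h2 : spow a q - spow b q ≤ 0 := sub_nonpos.mpr (spow_mono hq hab)
      nlinarith
  have hcoef : 2 ^ (p - 2) * (p + q - 1) ^ p / (p ^ p * q) ≤ 2 ^ (p - 2) * q ^ (p - 1) := by
    have h1 : p + q - 1 ≤ p * q := by nlinarith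
    have h2 : (p + q - 1) ^ p ≤ (p * q) ^ p :=
      Real.rpow_le_rpow (by linarith) h1 hp0.le
    have h3 : (p * q) ^ p = p ^ p * q ^ p := Real.mul_rpow hp0.le hq0.le
    have h4 : (0:ℝ) < p ^ p * q := mul_pos (Real.rpow_pos_of_pos hp0 p) hq0
    have h5 : 2 ^ (p - 2) * (p + q - 1) ^ p / (p ^ p * q) ≤
        2 ^ (p - 2) * (p ^ p * q ^ p) / (p ^ p * q) := by
      have h20 : (0:ℝ) ≤ 2 ^ (p - 2) := Real.rpow_nonneg two_pos.le _
      gcongr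
      exact h3 ▸ h2
    have h6 : 2 ^ (p - 2) * (p ^ p * q ^ p) / (p ^ p * q) = 2 ^ (p - 2) * q ^ (p - 1) := by
      rw [Real.rpow_sub hq0, Real.rpow_one]
      field_simp
    linarith
  calc (2 ^ (p - 2) * (p + q - 1) ^ p / (p ^ p * q)) *
        (spow c (p - 1) - spow d (p - 1)) * (spow a q - spow b q)
      = (2 ^ (p - 2) * (p + q - 1) ^ p / (p ^ p * q)) *
        ((spow c (p - 1) - spow d (p - 1)) * (spow a q - spow b q)) := by ring
    _ ≤ (2 ^ (p - 2) * q ^ (p - 1)) *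
        ((spow c (p - 1) - spow d (p - 1)) * (spow a q - spow b q)) :=
        mul_le_mul_of_nonneg_right hcoef hXY
    _ = 2 ^ (p - 2) * q ^ (p - 1) * (spow c (p - 1) - spow d (p - 1)) *
        (spow a q - spow b q) := by ring
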